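/- Let (α_j)_{j≥0} be a sequence in the open unit disk with Σ_j |α_j| < ∞, and C the associated half-infinite CMV matrix. Then for every n ≥ 1 the series Σ_{k≥0} (C^n)_{kk} converges absolutely. Moreover, each diagonal entry (C^n)_{kk} depends only on the coefficients α_{k-(2n-1)}, …, α_{k+2n-1} (with α's of negative index treated as 0), and satisfies the bound |(C^n)_{kk}| ≤ 4^n (|α_{k-(2n-1)}| + ⋯ + |α_{k+2n-1}|) for all k ≥ 4n. -/

import Mathlib

open scoped ComplexConjugate

/-- `ρ_j = √(1 - |α_j|²)` for a half-infinite sequence of coefficients. -/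
noncomputable def halfRho (α : ℕ → ℂ) (j : ℕ) : ℝ := Real.sqrt (1 - ‖α j‖ ^ 2)

/-- The factor `L = diag(Θ_0, Θ_2, …)` of the half-infinite CMV matrix, where
`Θ_j = [[conj α_j, ρ_j],[ρ_j, -α_j]]` acts on coordinates `j, j+1`. -/
noncomputable def halfCmvL (α : ℕ → ℂ) (j k : ℕ) : ℂ :=
  if Even j then
    (if k = j then conj (α j) else if k = j + 1 then (halfRho α j : ℂ) else 0)
  else
    (if k + 1 = j then (halfRho α (j - 1) : ℂ) else if k = j then -α (j - 1) else 0)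

/-- The factor `M = diag([1], Θ_1, Θ_3, …)` of the half-infinite CMV matrix. -/
noncomputable def halfCmvM (α : ℕ → ℂ) (j k : ℕ) : ℂ :=
  if j = 0 then (if k = 0 then 1 else 0)
  else if Odd j then
    (if k = j then conj (α j) else if k = j + 1 then (halfRho α j : ℂ) else 0)
  else
    (if k + 1 = j then (halfRho α (j - 1) : ℂ) else if k = j then -α (j - 1) else 0)

/-- The half-infinite CMV matrix `C = L M`; each row of `L` is supported in
`[j-1, j+1]`, so the matrix product is the displayed finite sum. -/
noncomputable def halfCmvC (α : ℕ → ℂ) (j k : ℕ) : ℂ :=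
  ∑ l ∈ Finset.Icc (j - 1) (j + 1), halfCmvL α j l * halfCmvM α l k

/-- Entries of powers `C^n`; each row of `C` is supported in `[j-2, j+2]`, so
the matrix product is the displayed finite sum. -/
noncomputable def halfCmvCpow (α : ℕ → ℂ) : ℕ → ℕ → ℕ → ℂ
  | 0, j, k => if j = k then 1 else 0
  | n + 1, j, k => ∑ l ∈ Finset.Icc (j - 2) (j + 2), halfCmvC α j l * halfCmvCpow α n l k

namespace HalfAux

lemma rho_nonneg (α : ℕ → ℂ) (j : ℕ) : 0 ≤ halfRho α j := Real.sqrt_nonneg _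
lemma rho_le_one (α : ℕ → ℂ) (j : ℕ) : halfRho α j ≤ 1 := by
  unfold halfRho
  calc Real.sqrt (1 - ‖α j‖ ^ 2) ≤ Real.sqrt 1 :=
        Real.sqrt_le_sqrt (by nlinarith [sq_nonneg (‖α j‖)])
    _ = 1 := Real.sqrt_one
lemma abs_rho (α : ℕ → ℂ) (j : ℕ) : ‖(halfRho α j : ℂ)‖ = halfRho α j := by
  rw [Complex.norm_real, Real.norm_of_nonneg (rho_nonneg α j)]
lemma abs_rho_le_one (α : ℕ → ℂ) (j : ℕ) : ‖(halfRho α j : ℂ)‖ ≤ 1 := by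
  rw [abs_rho]; exact rho_le_one α j
lemma abs_rho_sub_one (α : ℕ → ℂ) (j : ℕ) (h : ‖α j‖ ≤ 1) :
    ‖(halfRho α j : ℂ) - 1‖ ≤ ‖α j‖ := by
  have h0 : 0 ≤ 1 - ‖α j‖ ^ 2 := by nlinarith [norm_nonneg (α j)]
  have hsq : halfRho α j ^ 2 = 1 - ‖α j‖ ^ 2 := Real.sq_sqrt h0
  have h1 : (1 : ℝ) - halfRho α j ≤ ‖α j‖ := by
    nlinarith [rho_nonneg α j, rho_le_one α j, norm_nonneg (α j),
      mul_nonneg (rho_nonneg α j) (sub_nonneg.2 (rho_le_one α j)),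
      mul_nonneg (norm_nonneg (α j)) (sub_nonneg.2 h)]
  calc ‖(halfRho α j : ℂ) - 1‖ = |halfRho α j - 1| := by
        rw [← Complex.ofReal_one, ← Complex.ofReal_sub, Complex.norm_real, Real.norm_eq_abs]
    _ = 1 - halfRho α j := by rw [abs_of_nonpos (by linarith [rho_le_one α j])]; ring
    _ ≤ _ := h1
lemma abs_mul_sub_mul (x y x' y' : ℂ) (hx : ‖x‖ ≤ 1) (hy' : ‖y'‖ ≤ 1) :
    ‖x * y - x' * y'‖ ≤ ‖x - x'‖ + ‖y - y'‖ := by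
  have h : x * y - x' * y' = (x - x') * y' + x * (y - y') := by ring
  rw [h]
  refine le_trans (norm_add_le _ _) ?_
  rw [norm_mul, norm_mul]
  have := norm_nonneg (x - x')
  have := norm_nonneg (y - y')
  have := norm_nonneg x
  have := norm_nonneg y'
  nlinarith

lemma abs_mul_le_left {x y : ℂ} {c : ℝ} (hx : ‖x‖ ≤ c) (hy : ‖y‖ ≤ 1) :
    ‖x * y‖ ≤ c := by
  rw [norm_mul]
  nlinarith [norm_nonneg x, norm_nonneg y]
lemma abs_mul_le_right {x y : ℂ} {c : ℝ} (hx : ‖x‖ ≤ 1) (hy : ‖y‖ ≤ c) :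
    ‖x * y‖ ≤ c := by
  rw [norm_mul]
  nlinarith [norm_nonneg x, norm_nonneg y]
lemma abs_rhorho_sub_one (α : ℕ → ℂ) (i m : ℕ) (hi : ‖α i‖ ≤ 1)
    (hm : ‖α m‖ ≤ 1) :
    ‖(halfRho α i : ℂ) * (halfRho α m : ℂ) - 1‖ ≤
      ‖α i‖ + ‖α m‖ := by
  have h := abs_mul_sub_mul (halfRho α i : ℂ) (halfRho α m : ℂ) 1 1 (abs_rho_le_one α i)
    (by norm_num)
  rw [mul_one] at h
  exact h.trans (by gcongr <;> [exact abs_rho_sub_one α i hi; exact abs_rho_sub_one α m hm])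

/-- the zero Verblunsky sequence -/
def zseq : ℕ → ℂ := fun _ => 0

lemma rho_zseq (j : ℕ) : halfRho zseq j = 1 := by
  simp [halfRho, zseq]

lemma sum_insert_le (f : ℕ → ℝ) (hf : ∀ x, 0 ≤ f x) (a : ℕ) (s : Finset ℕ) :
    ∑ x ∈ insert a s, f x ≤ f a + ∑ x ∈ s, f x := by
  by_cases h : a ∈ s
  · rw [Finset.insert_eq_self.2 h]; nlinarith [hf a]
  · rw [Finset.sum_insert h]

lemma sum_support_le (s t : Finset ℕ) (f : ℕ → ℝ) (hf : ∀ x, 0 ≤ f x)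
    (h : ∀ l, l ∉ t → f l = 0) : ∑ l ∈ s, f l ≤ ∑ l ∈ t, f l := by
  classical
  have h1 : ∑ l ∈ s, f l = ∑ l ∈ s ∩ t, f l := by
    refine (Finset.sum_subset (Finset.inter_subset_left) ?_).symm
    intro x hx hx'
    exact h x (fun ht => hx' (Finset.mem_inter.2 ⟨hx, ht⟩))
  rw [h1]
  exact Finset.sum_le_sum_of_subset_of_nonneg Finset.inter_subset_right (fun i _ _ => hf i)

lemma sum_le_four (s : Finset ℕ) (f : ℕ → ℝ) (hf : ∀ x, 0 ≤ f x) (a b c d : ℕ)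
    (h : ∀ l, l ≠ a → l ≠ b → l ≠ c → l ≠ d → f l = 0) :
    ∑ l ∈ s, f l ≤ f a + f b + f c + f d := by
  have h1 : ∑ l ∈ s, f l ≤ ∑ l ∈ ({a, b, c, d} : Finset ℕ), f l := by
    refine sum_support_le s _ f hf (fun l hl => h l ?_ ?_ ?_ ?_) <;>
      (intro he; subst he; simp_all)
  refine h1.trans ?_
  have h2 : ∑ l ∈ ({a, b, c, d} : Finset ℕ), f l ≤
      f a + ∑ l ∈ ({b, c, d} : Finset ℕ), f l := sum_insert_le f hf _ _
  have h3 : ∑ l ∈ ({b, c, d} : Finset ℕ), f l ≤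
      f b + ∑ l ∈ ({c, d} : Finset ℕ), f l := sum_insert_le f hf _ _
  have h4 : ∑ l ∈ ({c, d} : Finset ℕ), f l ≤
      f c + ∑ l ∈ ({d} : Finset ℕ), f l := sum_insert_le f hf _ _
  rw [Finset.sum_singleton] at h4
  linarith


/-- closed form for the rows of `C`. -/
noncomputable def cRow (α : ℕ → ℂ) (j l : ℕ) : ℂ :=
  if j = 0 then
    (if l = 0 then conj (α 0)
     else if l = 1 then (halfRho α 0 : ℂ) * conj (α 1)
     else if l = 2 then (halfRho α 0 : ℂ) * (halfRho α 1 : ℂ) else 0)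
  else if Even j then
    (if l + 1 = j then conj (α j) * (halfRho α (j - 1) : ℂ)
     else if l = j then conj (α j) * (-α (j - 1))
     else if l = j + 1 then (halfRho α j : ℂ) * conj (α (j + 1))
     else if l = j + 2 then (halfRho α j : ℂ) * (halfRho α (j + 1) : ℂ) else 0)
  else if j = 1 then
    (if l = 0 then (halfRho α 0 : ℂ)
     else if l = 1 then (-α 0) * conj (α 1)
     else if l = 2 then (-α 0) * (halfRho α 1 : ℂ) else 0)
  else
    (if l + 2 = j then (halfRho α (j - 1) : ℂ) * (halfRho α (j - 2) : ℂ)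
     else if l + 1 = j then (halfRho α (j - 1) : ℂ) * (-α (j - 2))
     else if l = j then (-α (j - 1)) * conj (α j)
     else if l = j + 1 then (-α (j - 1)) * (halfRho α j : ℂ) else 0)

lemma Icc_triple (j : ℕ) (h : 1 ≤ j) : Finset.Icc (j - 1) (j + 1) = {j - 1, j, j + 1} := by
  ext x; simp [Finset.mem_Icc]; omega

lemma halfCmvC_eq (α : ℕ → ℂ) (j l : ℕ) : halfCmvC α j l = cRow α j l := by
  unfold halfCmvC cRow
  by_cases h0 : j = 0
  · subst h0
    rw [show Finset.Icc (0 - 1) (0 + 1) = {0, 1} from rfl]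
    rw [Finset.sum_insert (by decide), Finset.sum_singleton]
    simp only [halfCmvL, halfCmvM]
    norm_num
    split_ifs <;> first | ring1 | (exfalso; omega)
  by_cases h1 : j = 1
  · subst h1
    rw [Icc_triple 1 le_rfl]
    rw [Finset.sum_insert (by decide), Finset.sum_insert (by decide), Finset.sum_singleton]
    simp only [halfCmvL, halfCmvM]
    norm_num
    split_ifs <;> first | ring1 | (exfalso; omega)
  rw [Icc_triple j (by omega)]
  have hne1 : j - 1 ∉ ({j, j + 1} : Finset ℕ) := by simp; omega
  have hne2 : j ∉ ({j + 1} : Finset ℕ) := by simp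
  rw [Finset.sum_insert hne1, Finset.sum_insert hne2, Finset.sum_singleton]
  rcases Nat.even_or_odd j with he | ho
  · -- j even, j ≥ 2
    have h2 : 2 ≤ j := by rcases he with ⟨m, rfl⟩; omega
    have hL1 : halfCmvL α j (j - 1) = 0 := by
      simp only [halfCmvL, if_pos he]; split_ifs <;> first | rfl | (exfalso; omega)
    have hL2 : halfCmvL α j j = conj (α j) := by simp [halfCmvL, he]
    have hL3 : halfCmvL α j (j + 1) = (halfRho α j : ℂ) := by
      simp only [halfCmvL, if_pos he]; split_ifs <;> first | rfl | (exfalso; omega)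
    have hoj1 : ¬ Odd j := by simp [Nat.not_odd_iff_even.2 he]
    have hMj : halfCmvM α j l = (if l + 1 = j then (halfRho α (j - 1) : ℂ)
        else if l = j then -α (j - 1) else 0) := by
      simp only [halfCmvM, if_neg h0, if_neg hoj1]
    have hoj2 : Odd (j + 1) := Even.add_one he
    have hMj1 : halfCmvM α (j + 1) l = (if l = j + 1 then conj (α (j + 1))
        else if l = j + 2 then (halfRho α (j + 1) : ℂ) else 0) := by
      simp only [halfCmvM, if_neg (Nat.succ_ne_zero j), if_pos hoj2]
    rw [hL1, hL2, hL3, hMj, hMj1, if_neg h0, if_pos he, zero_mul, zero_add]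
    split_ifs <;> first | ring1 | (exfalso; omega)
  · -- j odd, j ≥ 3
    have he' : ¬ Even j := Nat.not_even_iff_odd.2 ho
    have h3 : 3 ≤ j := by rcases ho with ⟨m, rfl⟩; omega
    have hL1 : halfCmvL α j (j - 1) = (halfRho α (j - 1) : ℂ) := by
      simp only [halfCmvL, if_neg he']; split_ifs <;> first | rfl | (exfalso; omega)
    have hL2 : halfCmvL α j j = -α (j - 1) := by
      simp only [halfCmvL, if_neg he']; split_ifs <;> first | rfl | (exfalso; omega)
    have hL3 : halfCmvL α j (j + 1) = 0 := by
      simp only [halfCmvL, if_neg he']; split_ifs <;> first | rfl | (exfalso; omega)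
    have hj10 : j - 1 ≠ 0 := by omega
    have hoj1 : ¬ Odd (j - 1) := by
      rw [Nat.odd_iff]; have := Nat.odd_iff.1 ho; omega
    have hMj1 : halfCmvM α (j - 1) l = (if l + 1 = j - 1 then (halfRho α (j - 1 - 1) : ℂ)
        else if l = j - 1 then -α (j - 1 - 1) else 0) := by
      simp only [halfCmvM, if_neg hj10, if_neg hoj1]
    have hMj : halfCmvM α j l = (if l = j then conj (α j)
        else if l = j + 1 then (halfRho α j : ℂ) else 0) := by
      simp only [halfCmvM, if_neg h0, if_pos ho]
    rw [hL1, hL2, hL3, hMj1, hMj, if_neg h0, if_neg he', if_neg h1, zero_mul, add_zero]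
    have hsub : j - 1 - 1 = j - 2 := by omega
    rw [hsub]
    split_ifs <;> first | ring1 | (exfalso; omega)


lemma cRow_zseq (j l : ℕ) :
    cRow zseq j l = if (if Even j then l = j + 2 else l = j - 2) then 1 else 0 := by
  unfold cRow
  by_cases h0 : j = 0
  · subst h0
    simp only [if_pos rfl, if_pos (by decide : Even 0)]
    simp [zseq, rho_zseq]
    split_ifs <;> first | rfl | (exfalso; omega) | norm_num
  by_cases he : Even j
  · simp only [if_neg h0, if_pos he, zseq, rho_zseq, map_zero, Complex.ofReal_one]
    split_ifs <;> first | rfl | (exfalso; omega) | norm_num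
  by_cases h1 : j = 1
  · subst h1
    simp only [if_neg h0, if_neg he, if_pos rfl, zseq, rho_zseq, map_zero, Complex.ofReal_one]
    split_ifs <;> first | rfl | (exfalso; omega) | norm_num
  · simp only [if_neg h0, if_neg he, if_neg h1, zseq, rho_zseq, map_zero, Complex.ofReal_one]
    split_ifs <;> first | rfl | (exfalso; omega) | norm_num

lemma mul01 {a b : ℝ} (ha0 : 0 ≤ a) (ha : a ≤ 1) (hb0 : 0 ≤ b) (hb : b ≤ 1) : a * b ≤ 1 := by
  nlinarith

set_option maxHeartbeats 1000000 in
lemma cRow_abs_le_one (α : ℕ → ℂ) (hα : ∀ i, ‖α i‖ ≤ 1) (j l : ℕ) :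
    ‖cRow α j l‖ ≤ 1 := by
  unfold cRow
  split_ifs <;>
    first
      | (rw [norm_zero]; norm_num)
      | (rw [Complex.norm_conj]; exact hα _)
      | (rw [abs_rho]; exact rho_le_one α _)
      | (rw [norm_mul, Complex.norm_conj, abs_rho];
         exact mul01 (norm_nonneg _) (hα _) (rho_nonneg α _) (rho_le_one α _))
      | (rw [norm_mul, Complex.norm_conj, norm_neg];
         exact mul01 (norm_nonneg _) (hα _) (norm_nonneg _) (hα _))
      | (rw [norm_mul, abs_rho, Complex.norm_conj];
         exact mul01 (rho_nonneg α _) (rho_le_one α _) (norm_nonneg _) (hα _))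
      | (rw [norm_mul, abs_rho, abs_rho];
         exact mul01 (rho_nonneg α _) (rho_le_one α _) (rho_nonneg α _) (rho_le_one α _))
      | (rw [norm_mul, abs_rho, norm_neg];
         exact mul01 (rho_nonneg α _) (rho_le_one α _) (norm_nonneg _) (hα _))
      | (rw [norm_mul, norm_neg, Complex.norm_conj];
         exact mul01 (norm_nonneg _) (hα _) (norm_nonneg _) (hα _))
      | (rw [norm_mul, norm_neg, abs_rho];
         exact mul01 (norm_nonneg _) (hα _) (rho_nonneg α _) (rho_le_one α _))

lemma cRow_support_even (α : ℕ → ℂ) (j : ℕ) (he : Even j) :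
    ∀ l, l ≠ j - 1 → l ≠ j → l ≠ j + 1 → l ≠ j + 2 → cRow α j l = 0 := by
  intro l h1 h2 h3 h4
  unfold cRow
  simp only [he, if_true]
  split_ifs <;> first | rfl | (exfalso; omega)

lemma cRow_support_odd (α : ℕ → ℂ) (j : ℕ) (he : ¬ Even j) :
    ∀ l, l ≠ j - 2 → l ≠ j - 1 → l ≠ j → l ≠ j + 1 → cRow α j l = 0 := by
  intro l h1 h2 h3 h4
  have h0 : j ≠ 0 := by rintro rfl; exact he (by decide)
  unfold cRow
  simp only [he, if_false, if_neg h0]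
  split_ifs <;> first | rfl | (exfalso; omega)

lemma rowAbs (α : ℕ → ℂ) (hα : ∀ i, ‖α i‖ ≤ 1) (j : ℕ) :
    ∑ l ∈ Finset.Icc (j - 2) (j + 2), ‖halfCmvC α j l‖ ≤ 4 := by
  have hf : ∀ x, 0 ≤ ‖halfCmvC α j x‖ := fun x => norm_nonneg _
  rcases Nat.even_or_odd j with he | ho
  · have h := sum_le_four (Finset.Icc (j - 2) (j + 2)) (fun l => ‖halfCmvC α j l‖)
      hf (j - 1) j (j + 1) (j + 2) (fun l h1 h2 h3 h4 => by
        simp only [halfCmvC_eq]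
        rw [cRow_support_even α j he l h1 h2 h3 h4, norm_zero])
    refine h.trans ?_
    have b1 := cRow_abs_le_one α hα j (j - 1)
    have b2 := cRow_abs_le_one α hα j j
    have b3 := cRow_abs_le_one α hα j (j + 1)
    have b4 := cRow_abs_le_one α hα j (j + 2)
    simp only [halfCmvC_eq]
    linarith
  · have he : ¬ Even j := Nat.not_even_iff_odd.2 ho
    have h := sum_le_four (Finset.Icc (j - 2) (j + 2)) (fun l => ‖halfCmvC α j l‖)
      hf (j - 2) (j - 1) j (j + 1) (fun l h1 h2 h3 h4 => by
        simp only [halfCmvC_eq]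
        rw [cRow_support_odd α j he l h1 h2 h3 h4, norm_zero])
    refine h.trans ?_
    have b1 := cRow_abs_le_one α hα j (j - 2)
    have b2 := cRow_abs_le_one α hα j (j - 1)
    have b3 := cRow_abs_le_one α hα j j
    have b4 := cRow_abs_le_one α hα j (j + 1)
    simp only [halfCmvC_eq]
    linarith

lemma rowZ_le_one (j : ℕ) :
    ∑ l ∈ Finset.Icc (j - 2) (j + 2), ‖halfCmvC zseq j l‖ ≤ 1 := by
  have h : ∀ l, ‖halfCmvC zseq j l‖ =
      if (if Even j then l = j + 2 else l = j - 2) then 1 else 0 := by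
    intro l
    rw [halfCmvC_eq, cRow_zseq]
    split_ifs <;> simp
  simp_rw [h]
  by_cases he : Even j
  · simp only [if_pos he]
    rw [Finset.sum_ite_eq' (Finset.Icc (j - 2) (j + 2)) (j + 2) (fun _ => (1 : ℝ))]
    split_ifs <;> norm_num
  · simp only [if_neg he]
    rw [Finset.sum_ite_eq' (Finset.Icc (j - 2) (j + 2)) (j - 2) (fun _ => (1 : ℝ))]
    split_ifs <;> norm_num

lemma single_le_W (α : ℕ → ℂ) (a b m : ℕ) (h1 : a ≤ m) (h2 : m ≤ b) :
    ‖α m‖ ≤ ∑ x ∈ Finset.Icc a b, ‖α x‖ :=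
  Finset.single_le_sum (fun i _ => norm_nonneg (α i)) (Finset.mem_Icc.2 ⟨h1, h2⟩)

lemma pair_le_W (α : ℕ → ℂ) (a b m1 m2 : ℕ) (hne : m1 ≠ m2) (h1 : a ≤ m1) (h2 : m1 ≤ b)
    (h3 : a ≤ m2) (h4 : m2 ≤ b) :
    ‖α m1‖ + ‖α m2‖ ≤ ∑ x ∈ Finset.Icc a b, ‖α x‖ := by
  have hsub : ({m1, m2} : Finset ℕ) ⊆ Finset.Icc a b := by
    intro x hx
    simp only [Finset.mem_insert, Finset.mem_singleton] at hx
    rcases hx with rfl | rfl <;> exact Finset.mem_Icc.2 (by omega)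
  calc ‖α m1‖ + ‖α m2‖ = ∑ x ∈ ({m1, m2} : Finset ℕ), ‖α x‖ :=
        (Finset.sum_pair (f := fun x => ‖α x‖) hne).symm
    _ ≤ _ := Finset.sum_le_sum_of_subset_of_nonneg hsub (fun i _ _ => norm_nonneg (α i))

lemma W_nonneg (α : ℕ → ℂ) (a b : ℕ) : 0 ≤ ∑ x ∈ Finset.Icc a b, ‖α x‖ :=
  Finset.sum_nonneg (fun i _ => norm_nonneg (α i))

lemma abs_conj_le (α : ℕ → ℂ) (i : ℕ) : ‖conj (α i)‖ ≤ ‖α i‖ :=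
  (Complex.norm_conj (α i)).le

lemma abs_neg_le (α : ℕ → ℂ) (i : ℕ) : ‖-α i‖ ≤ ‖α i‖ :=
  (norm_neg (α i)).le

lemma abs_neg_le_one (α : ℕ → ℂ) (hα : ∀ i, ‖α i‖ ≤ 1) (i : ℕ) :
    ‖-α i‖ ≤ 1 := (abs_neg_le α i).trans (hα i)

lemma abs_conj_le_one (α : ℕ → ℂ) (hα : ∀ i, ‖α i‖ ≤ 1) (i : ℕ) :
    ‖conj (α i)‖ ≤ 1 := (abs_conj_le α i).trans (hα i)

set_option maxHeartbeats 1000000 in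
lemma rowDelta (α : ℕ → ℂ) (hα : ∀ i, ‖α i‖ ≤ 1) (j : ℕ) :
    ∑ l ∈ Finset.Icc (j - 2) (j + 2), ‖halfCmvC α j l - halfCmvC zseq j l‖
      ≤ 3 * ∑ m ∈ Finset.Icc (j - 2) (j + 1), ‖α m‖ := by
  have hf : ∀ x, 0 ≤ ‖halfCmvC α j x - halfCmvC zseq j x‖ :=
    fun x => norm_nonneg _
  have hWnn := W_nonneg α (j - 2) (j + 1)
  by_cases h0 : j = 0
  · subst h0
    have hsupp : ∀ l, l ≠ 0 → l ≠ 1 → l ≠ 2 → l ≠ 3 →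
        ‖halfCmvC α 0 l - halfCmvC zseq 0 l‖ = 0 := by
      intro l h1 h2 h3 h4
      rw [halfCmvC_eq, halfCmvC_eq,
        cRow_support_even α 0 (by decide) l (by omega) (by omega) (by omega) (by omega),
        cRow_support_even zseq 0 (by decide) l (by omega) (by omega) (by omega) (by omega),
        sub_zero, norm_zero]
    refine (sum_le_four _ _ hf 0 1 2 3 hsupp).trans ?_
    have e1 : halfCmvC α 0 0 = conj (α 0) := by
      rw [halfCmvC_eq]; unfold cRow; norm_num
    have e2 : halfCmvC α 0 1 = (halfRho α 0 : ℂ) * conj (α 1) := by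
      rw [halfCmvC_eq]; unfold cRow; norm_num
    have e3 : halfCmvC α 0 2 = (halfRho α 0 : ℂ) * (halfRho α 1 : ℂ) := by
      rw [halfCmvC_eq]; unfold cRow; norm_num
    have e4 : halfCmvC α 0 3 = 0 := by
      rw [halfCmvC_eq]; exact cRow_support_even α 0 (by decide) 3 (by omega) (by omega)
        (by omega) (by omega)
    have z1 : halfCmvC zseq 0 0 = 0 := by
      rw [halfCmvC_eq, cRow_zseq]; norm_num
    have z2 : halfCmvC zseq 0 1 = 0 := by
      rw [halfCmvC_eq, cRow_zseq]; norm_num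
    have z3 : halfCmvC zseq 0 2 = 1 := by
      rw [halfCmvC_eq, cRow_zseq]; norm_num
    have z4 : halfCmvC zseq 0 3 = 0 := by
      rw [halfCmvC_eq, cRow_zseq]; norm_num
    rw [e1, e2, e3, e4, z1, z2, z3, z4, sub_zero, sub_zero, sub_zero, norm_zero]
    have b1 : ‖conj (α 0)‖ ≤ ‖α 0‖ := abs_conj_le α 0
    have b2 : ‖(halfRho α 0 : ℂ) * conj (α 1)‖ ≤ ‖α 1‖ :=
      abs_mul_le_right (abs_rho_le_one α 0) (abs_conj_le α 1)
    have b3 : ‖(halfRho α 0 : ℂ) * (halfRho α 1 : ℂ) - 1‖ ≤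
        ‖α 0‖ + ‖α 1‖ := abs_rhorho_sub_one α 0 1 (hα 0) (hα 1)
    have hp := pair_le_W α (0 - 2) (0 + 1) 0 1 (by omega) (by omega) (by omega) (by omega)
      (by omega)
    have hn0 := norm_nonneg (α 0)
    have hn1 := norm_nonneg (α 1)
    linarith
  by_cases h1 : j = 1
  · subst h1
    have hsupp : ∀ l, l ≠ 0 → l ≠ 1 → l ≠ 2 → l ≠ 3 →
        ‖halfCmvC α 1 l - halfCmvC zseq 1 l‖ = 0 := by
      intro l h1 h2 h3 h4
      rw [halfCmvC_eq, halfCmvC_eq,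
        cRow_support_odd α 1 (by decide) l (by omega) (by omega) (by omega) (by omega),
        cRow_support_odd zseq 1 (by decide) l (by omega) (by omega) (by omega) (by omega),
        sub_zero, norm_zero]
    refine (sum_le_four _ _ hf 0 1 2 3 hsupp).trans ?_
    have e1 : halfCmvC α 1 0 = (halfRho α 0 : ℂ) := by
      rw [halfCmvC_eq]; unfold cRow; norm_num
    have e2 : halfCmvC α 1 1 = (-α 0) * conj (α 1) := by
      rw [halfCmvC_eq]; unfold cRow; norm_num
    have e3 : halfCmvC α 1 2 = (-α 0) * (halfRho α 1 : ℂ) := by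
      rw [halfCmvC_eq]; unfold cRow; norm_num
    have e4 : halfCmvC α 1 3 = 0 := by
      rw [halfCmvC_eq]; exact cRow_support_odd α 1 (by decide) 3 (by omega) (by omega)
        (by omega) (by omega)
    have z1 : halfCmvC zseq 1 0 = 1 := by
      rw [halfCmvC_eq, cRow_zseq]; norm_num
    have z2 : halfCmvC zseq 1 1 = 0 := by
      rw [halfCmvC_eq, cRow_zseq]; norm_num
    have z3 : halfCmvC zseq 1 2 = 0 := by
      rw [halfCmvC_eq, cRow_zseq]; norm_num
    have z4 : halfCmvC zseq 1 3 = 0 := by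
      rw [halfCmvC_eq, cRow_zseq]; norm_num
    rw [e1, e2, e3, e4, z1, z2, z3, z4, sub_zero, sub_zero, sub_zero, norm_zero]
    have b1 : ‖(halfRho α 0 : ℂ) - 1‖ ≤ ‖α 0‖ :=
      abs_rho_sub_one α 0 (hα 0)
    have b2 : ‖(-α 0) * conj (α 1)‖ ≤ ‖α 0‖ :=
      abs_mul_le_left (abs_neg_le α 0) (abs_conj_le_one α hα 1)
    have b3 : ‖(-α 0) * (halfRho α 1 : ℂ)‖ ≤ ‖α 0‖ :=
      abs_mul_le_left (abs_neg_le α 0) (abs_rho_le_one α 1)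
    have hs := single_le_W α (1 - 2) (1 + 1) 0 (by omega) (by omega)
    linarith
  rcases Nat.even_or_odd j with he | ho
  · -- even, j ≥ 2
    have h2 : 2 ≤ j := by rcases he with ⟨m, rfl⟩; omega
    have hsupp : ∀ l, l ≠ j - 1 → l ≠ j → l ≠ j + 1 → l ≠ j + 2 →
        ‖halfCmvC α j l - halfCmvC zseq j l‖ = 0 := by
      intro l ha hb hc hd
      rw [halfCmvC_eq, halfCmvC_eq, cRow_support_even α j he l ha hb hc hd,
        cRow_support_even zseq j he l ha hb hc hd, sub_zero, norm_zero]
    refine (sum_le_four _ _ hf (j - 1) j (j + 1) (j + 2) hsupp).trans ?_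
    have e1 : halfCmvC α j (j - 1) = conj (α j) * (halfRho α (j - 1) : ℂ) := by
      rw [halfCmvC_eq]; unfold cRow
      rw [if_neg h0, if_pos he, if_pos (by omega)]
    have e2 : halfCmvC α j j = conj (α j) * (-α (j - 1)) := by
      rw [halfCmvC_eq]; unfold cRow
      rw [if_neg h0, if_pos he, if_neg (by omega), if_pos rfl]
    have e3 : halfCmvC α j (j + 1) = (halfRho α j : ℂ) * conj (α (j + 1)) := by
      rw [halfCmvC_eq]; unfold cRow
      rw [if_neg h0, if_pos he, if_neg (by omega), if_neg (by omega), if_pos rfl]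
    have e4 : halfCmvC α j (j + 2) = (halfRho α j : ℂ) * (halfRho α (j + 1) : ℂ) := by
      rw [halfCmvC_eq]; unfold cRow
      rw [if_neg h0, if_pos he, if_neg (by omega), if_neg (by omega), if_neg (by omega),
        if_pos rfl]
    have z1 : halfCmvC zseq j (j - 1) = 0 := by
      rw [halfCmvC_eq, cRow_zseq]; simp only [he, if_true]; rw [if_neg (by omega)]
    have z2 : halfCmvC zseq j j = 0 := by
      rw [halfCmvC_eq, cRow_zseq]; simp only [he, if_true]; rw [if_neg (by omega)]
    have z3 : halfCmvC zseq j (j + 1) = 0 := by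
      rw [halfCmvC_eq, cRow_zseq]; simp only [he, if_true]; rw [if_neg (by omega)]
    have z4 : halfCmvC zseq j (j + 2) = 1 := by
      rw [halfCmvC_eq, cRow_zseq]; simp [he]
    rw [e1, e2, e3, e4, z1, z2, z3, z4, sub_zero, sub_zero, sub_zero]
    have b1 : ‖conj (α j) * (halfRho α (j - 1) : ℂ)‖ ≤ ‖α j‖ :=
      abs_mul_le_left (abs_conj_le α j) (abs_rho_le_one α (j - 1))
    have b2 : ‖conj (α j) * (-α (j - 1))‖ ≤ ‖α j‖ :=
      abs_mul_le_left (abs_conj_le α j) (abs_neg_le_one α hα (j - 1))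
    have b3 : ‖(halfRho α j : ℂ) * conj (α (j + 1))‖ ≤ ‖α (j + 1)‖ :=
      abs_mul_le_right (abs_rho_le_one α j) (abs_conj_le α (j + 1))
    have b4 : ‖(halfRho α j : ℂ) * (halfRho α (j + 1) : ℂ) - 1‖ ≤
        ‖α j‖ + ‖α (j + 1)‖ :=
      abs_rhorho_sub_one α j (j + 1) (hα j) (hα (j + 1))
    have hp := pair_le_W α (j - 2) (j + 1) j (j + 1) (by omega) (by omega) (by omega)
      (by omega) (by omega)
    have hnj := norm_nonneg (α j)
    have hnj1 := norm_nonneg (α (j + 1))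
    linarith
  · -- odd, j ≥ 3
    have he : ¬ Even j := Nat.not_even_iff_odd.2 ho
    have h3 : 3 ≤ j := by rcases ho with ⟨m, rfl⟩; omega
    have hsupp : ∀ l, l ≠ j - 2 → l ≠ j - 1 → l ≠ j → l ≠ j + 1 →
        ‖halfCmvC α j l - halfCmvC zseq j l‖ = 0 := by
      intro l ha hb hc hd
      rw [halfCmvC_eq, halfCmvC_eq, cRow_support_odd α j he l ha hb hc hd,
        cRow_support_odd zseq j he l ha hb hc hd, sub_zero, norm_zero]
    refine (sum_le_four _ _ hf (j - 2) (j - 1) j (j + 1) hsupp).trans ?_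
    have e1 : halfCmvC α j (j - 2) = (halfRho α (j - 1) : ℂ) * (halfRho α (j - 2) : ℂ) := by
      rw [halfCmvC_eq]; unfold cRow
      rw [if_neg h0, if_neg he, if_neg h1, if_pos (by omega)]
    have e2 : halfCmvC α j (j - 1) = (halfRho α (j - 1) : ℂ) * (-α (j - 2)) := by
      rw [halfCmvC_eq]; unfold cRow
      rw [if_neg h0, if_neg he, if_neg h1, if_neg (by omega), if_pos (by omega)]
    have e3 : halfCmvC α j j = (-α (j - 1)) * conj (α j) := by
      rw [halfCmvC_eq]; unfold cRow
      rw [if_neg h0, if_neg he, if_neg h1, if_neg (by omega), if_neg (by omega), if_pos rfl]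
    have e4 : halfCmvC α j (j + 1) = (-α (j - 1)) * (halfRho α j : ℂ) := by
      rw [halfCmvC_eq]; unfold cRow
      rw [if_neg h0, if_neg he, if_neg h1, if_neg (by omega), if_neg (by omega),
        if_neg (by omega), if_pos rfl]
    have z1 : halfCmvC zseq j (j - 2) = 1 := by
      rw [halfCmvC_eq, cRow_zseq]; simp [he]
    have z2 : halfCmvC zseq j (j - 1) = 0 := by
      rw [halfCmvC_eq, cRow_zseq]; simp only [he, if_false]; rw [if_neg (by omega)]
    have z3 : halfCmvC zseq j j = 0 := by
      rw [halfCmvC_eq, cRow_zseq]; simp only [he, if_false]; rw [if_neg (by omega)]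
    have z4 : halfCmvC zseq j (j + 1) = 0 := by
      rw [halfCmvC_eq, cRow_zseq]; simp only [he, if_false]; rw [if_neg (by omega)]
    rw [e1, e2, e3, e4, z1, z2, z3, z4, sub_zero, sub_zero, sub_zero]
    have b1 : ‖(halfRho α (j - 1) : ℂ) * (halfRho α (j - 2) : ℂ) - 1‖ ≤
        ‖α (j - 1)‖ + ‖α (j - 2)‖ :=
      abs_rhorho_sub_one α (j - 1) (j - 2) (hα (j - 1)) (hα (j - 2))
    have b2 : ‖(halfRho α (j - 1) : ℂ) * (-α (j - 2))‖ ≤ ‖α (j - 2)‖ :=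
      abs_mul_le_right (abs_rho_le_one α (j - 1)) (abs_neg_le α (j - 2))
    have b3 : ‖(-α (j - 1)) * conj (α j)‖ ≤ ‖α (j - 1)‖ :=
      abs_mul_le_left (abs_neg_le α (j - 1)) (abs_conj_le_one α hα j)
    have b4 : ‖(-α (j - 1)) * (halfRho α j : ℂ)‖ ≤ ‖α (j - 1)‖ :=
      abs_mul_le_left (abs_neg_le α (j - 1)) (abs_rho_le_one α j)
    have hp := pair_le_W α (j - 2) (j + 1) (j - 2) (j - 1) (by omega) (by omega) (by omega)
      (by omega) (by omega)
    have hnj := norm_nonneg (α (j - 2))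
    have hnj1 := norm_nonneg (α (j - 1))
    linarith


lemma finish1 {x : ℂ} {W c : ℝ} (hx : ‖x‖ ≤ c) (hc : c ≤ W) (hW : 0 ≤ W) :
    ‖x‖ ≤ 4 * W := by linarith

lemma finish2 {x : ℂ} {W a b : ℝ} (hx : ‖x‖ ≤ a + b) (ha : a ≤ W) (hb : b ≤ W)
    (hW : 0 ≤ W) : ‖x‖ ≤ 4 * W := by linarith

lemma boundA {W : ℝ} (α : ℕ → ℂ) (a : ℕ) (ha : ‖α a‖ ≤ W) (hW : 0 ≤ W) :
    ‖α a‖ ≤ 4 * W := by linarith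

lemma boundRA {W : ℝ} (α : ℕ → ℂ) (a b : ℕ) (hb : ‖α b‖ ≤ W) (hW : 0 ≤ W) :
    halfRho α a * ‖α b‖ ≤ 4 * W := by
  nlinarith [rho_nonneg α a, rho_le_one α a, norm_nonneg (α b)]

lemma boundAR {W : ℝ} (α : ℕ → ℂ) (a b : ℕ) (ha : ‖α a‖ ≤ W) (hW : 0 ≤ W) :
    ‖α a‖ * halfRho α b ≤ 4 * W := by
  nlinarith [rho_nonneg α b, rho_le_one α b, norm_nonneg (α a)]

lemma boundAA {W : ℝ} (α : ℕ → ℂ) (a b : ℕ) (hb1 : ‖α b‖ ≤ 1)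
    (ha : ‖α a‖ ≤ W) (hW : 0 ≤ W) :
    ‖α a‖ * ‖α b‖ ≤ 4 * W := by
  nlinarith [norm_nonneg (α a), norm_nonneg (α b)]

set_option maxHeartbeats 1000000 in
lemma entryDelta (α : ℕ → ℂ) (hα : ∀ i, ‖α i‖ ≤ 1) (j l : ℕ) :
    ‖halfCmvC α j l - halfCmvC zseq j l‖
      ≤ 4 * ∑ m ∈ Finset.Icc (min j l - 1) (max j l + 1), ‖α m‖ := by
  set W := ∑ m ∈ Finset.Icc (min j l - 1) (max j l + 1), ‖α m‖ with hWdef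
  have hWnn : 0 ≤ W := W_nonneg α _ _
  have hs : ∀ m, min j l - 1 ≤ m → m ≤ max j l + 1 → ‖α m‖ ≤ W :=
    fun m h1 h2 => single_le_W α _ _ m h1 h2
  rw [halfCmvC_eq, halfCmvC_eq, cRow_zseq]
  by_cases h0 : j = 0
  · subst h0
    unfold cRow
    simp only [show Even 0 from by decide, if_true]
    split_ifs <;>
      (try simp only [sub_zero, norm_mul, norm_zero, map_mul, map_zero, norm_neg, Complex.norm_conj,
        abs_rho]) <;>
      first
        | contradiction
        | (exfalso; omega)
        | linarith
        | (exact boundA α 0 (hs 0 (by omega) (by omega)) hWnn)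
        | (exact boundRA α 0 1 (hs 1 (by omega) (by omega)) hWnn)
        | (exact finish2 (abs_rhorho_sub_one α 0 1 (hα 0) (hα 1))
            (hs 0 (by omega) (by omega)) (hs 1 (by omega) (by omega)) hWnn)
  rcases Nat.even_or_odd j with he | ho
  · have h2 : 2 ≤ j := by rcases he with ⟨m, rfl⟩; omega
    unfold cRow
    simp only [h0, he, if_true, if_false]
    split_ifs <;>
      (try simp only [sub_zero, norm_mul, norm_zero, map_mul, map_zero, norm_neg, Complex.norm_conj,
        abs_rho]) <;>
      first
        | contradiction
        | (exfalso; omega)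
        | linarith
        | (exact boundAR α j (j - 1) (hs j (by omega) (by omega)) hWnn)
        | (exact boundAA α j (j - 1) (hα (j - 1)) (hs j (by omega) (by omega)) hWnn)
        | (exact boundRA α j (j + 1) (hs (j + 1) (by omega) (by omega)) hWnn)
        | (exact finish2 (abs_rhorho_sub_one α j (j + 1) (hα j) (hα (j + 1)))
            (hs j (by omega) (by omega)) (hs (j + 1) (by omega) (by omega)) hWnn)
  · have he : ¬ Even j := Nat.not_even_iff_odd.2 ho
    have h1' : 1 ≤ j := by rcases ho with ⟨m, rfl⟩; omega
    by_cases h1 : j = 1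
    · subst h1
      unfold cRow
      simp only [show ¬ Even 1 from by decide, if_false, if_true]
      split_ifs <;>
        (try simp only [sub_zero, norm_mul, norm_zero, map_mul, map_zero, norm_neg, Complex.norm_conj,
          abs_rho]) <;>
        first
          | contradiction
          | (exfalso; omega)
          | linarith
          | (exact finish1 (abs_rho_sub_one α 0 (hα 0)) (hs 0 (by omega) (by omega)) hWnn)
          | (exact boundAA α 0 1 (hα 1) (hs 0 (by omega) (by omega)) hWnn)
          | (exact boundAR α 0 1 (hs 0 (by omega) (by omega)) hWnn)
    · have h3 : 3 ≤ j := by rcases ho with ⟨m, rfl⟩; omega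
      unfold cRow
      simp only [h0, he, h1, if_true, if_false]
      split_ifs <;>
        (try simp only [sub_zero, norm_mul, norm_zero, map_mul, map_zero, norm_neg, Complex.norm_conj,
          abs_rho]) <;>
        first
          | contradiction
          | (exfalso; omega)
          | linarith
          | (exact finish2 (abs_rhorho_sub_one α (j - 1) (j - 2) (hα (j - 1)) (hα (j - 2)))
              (hs (j - 1) (by omega) (by omega)) (hs (j - 2) (by omega) (by omega)) hWnn)
          | (exact boundRA α (j - 1) (j - 2) (hs (j - 2) (by omega) (by omega)) hWnn)
          | (exact boundAA α (j - 1) j (hα j) (hs (j - 1) (by omega) (by omega)) hWnn)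
          | (exact boundAR α (j - 1) j (hs (j - 1) (by omega) (by omega)) hWnn)

set_option maxHeartbeats 1000000 in
lemma cRow_congr (α β : ℕ → ℂ) (j l : ℕ)
    (h : ∀ m, min j l - 1 ≤ m → m ≤ max j l + 1 → β m = α m) :
    cRow β j l = cRow α j l := by
  have hr : ∀ m, min j l - 1 ≤ m → m ≤ max j l + 1 →
      ((halfRho β m : ℝ) : ℂ) = ((halfRho α m : ℝ) : ℂ) := fun m h1 h2 => by
    unfold halfRho; rw [h m h1 h2]
  unfold cRow
  by_cases h0 : j = 0
  · subst h0
    split_ifs <;>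
      first
        | rfl
        | contradiction
        | (exfalso; omega)
        | (rw [h 0 (by omega) (by omega)] <;> rfl)
        | (rw [hr 0 (by omega) (by omega), h 1 (by omega) (by omega)] <;> rfl)
        | (rw [hr 0 (by omega) (by omega), hr 1 (by omega) (by omega)] <;> rfl)
  rcases Nat.even_or_odd j with he | ho
  · simp only [h0, he, if_true, if_false]
    split_ifs <;>
      first
        | rfl
        | contradiction
        | (exfalso; omega)
        | (rw [h j (by omega) (by omega), hr (j - 1) (by omega) (by omega)] <;> rfl)
        | (rw [h j (by omega) (by omega), h (j - 1) (by omega) (by omega)] <;> rfl)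
        | (rw [hr j (by omega) (by omega), h (j + 1) (by omega) (by omega)] <;> rfl)
        | (rw [hr j (by omega) (by omega), hr (j + 1) (by omega) (by omega)] <;> rfl)
  · have he : ¬ Even j := Nat.not_even_iff_odd.2 ho
    have h1' : 1 ≤ j := by rcases ho with ⟨m, rfl⟩; omega
    by_cases h1 : j = 1
    · subst h1
      split_ifs <;>
        first
          | rfl
          | contradiction
          | (exfalso; omega)
          | (rw [hr 0 (by omega) (by omega)] <;> rfl)
          | (rw [h 0 (by omega) (by omega), h 1 (by omega) (by omega)] <;> rfl)
          | (rw [h 0 (by omega) (by omega), hr 1 (by omega) (by omega)] <;> rfl)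
    · simp only [h0, he, h1, if_true, if_false]
      split_ifs <;>
        first
          | rfl
          | contradiction
          | (exfalso; omega)
          | (rw [hr (j - 1) (by omega) (by omega), hr (j - 2) (by omega) (by omega)] <;> rfl)
          | (rw [hr (j - 1) (by omega) (by omega), h (j - 2) (by omega) (by omega)] <;> rfl)
          | (rw [h (j - 1) (by omega) (by omega), h j (by omega) (by omega)] <;> rfl)
          | (rw [h (j - 1) (by omega) (by omega), hr j (by omega) (by omega)] <;> rfl)

lemma halfCmvC_congr (α β : ℕ → ℂ) (j l : ℕ)
    (h : ∀ m, min j l - 1 ≤ m → m ≤ max j l + 1 → β m = α m) :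
    halfCmvC β j l = halfCmvC α j l := by
  rw [halfCmvC_eq, halfCmvC_eq]; exact cRow_congr α β j l h

lemma powAbs (α : ℕ → ℂ) (hα : ∀ i, ‖α i‖ ≤ 1) :
    ∀ n j k, ‖halfCmvCpow α n j k‖ ≤ 4 ^ n := by
  intro n
  induction n with
  | zero =>
    intro j k
    simp only [halfCmvCpow, pow_zero]
    split_ifs <;> simp
  | succ n ih =>
    intro j k
    show ‖∑ l ∈ Finset.Icc (j - 2) (j + 2), halfCmvC α j l * halfCmvCpow α n l k‖
      ≤ 4 ^ (n + 1)
    refine le_trans (norm_sum_le _ _) ?_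
    have h1 : ∀ l ∈ Finset.Icc (j - 2) (j + 2),
        ‖halfCmvC α j l * halfCmvCpow α n l k‖
          ≤ ‖halfCmvC α j l‖ * 4 ^ n := by
      intro l _
      rw [norm_mul]
      exact mul_le_mul_of_nonneg_left (ih l k) (norm_nonneg _)
    refine le_trans (Finset.sum_le_sum h1) ?_
    rw [← Finset.sum_mul]
    have h2 := rowAbs α hα j
    have h3 : (0:ℝ) ≤ 4 ^ n := by positivity
    calc (∑ l ∈ Finset.Icc (j - 2) (j + 2), ‖halfCmvC α j l‖) * 4 ^ n
        ≤ 4 * 4 ^ n := by nlinarith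
      _ = 4 ^ (n + 1) := by ring

lemma powZseq : ∀ n j, (Even j → ∀ k, halfCmvCpow zseq n j k = if k = j + 2 * n then 1 else 0) ∧
    (¬ Even j → 2 * n ≤ j → ∀ k, halfCmvCpow zseq n j k = if k + 2 * n = j then 1 else 0) := by
  intro n
  induction n with
  | zero =>
    intro j
    constructor
    · intro _ k
      simp only [halfCmvCpow]
      congr 1
      simp only [eq_iff_iff]
      omega
    · intro _ _ k
      simp only [halfCmvCpow]
      congr 1
      simp only [eq_iff_iff]
      omega
  | succ n ih =>
    intro j
    have hz : ∀ l k, halfCmvC zseq j l * halfCmvCpow zseq n l k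
        = if l = (if Even j then j + 2 else j - 2) then halfCmvCpow zseq n l k else 0 := by
      intro l k
      rw [halfCmvC_eq, cRow_zseq]
      by_cases he : Even j
      · simp only [he, if_true]
        split_ifs <;> simp
      · simp only [he, if_false]
        split_ifs <;> simp
    constructor
    · intro he k
      show (∑ l ∈ Finset.Icc (j - 2) (j + 2), halfCmvC zseq j l * halfCmvCpow zseq n l k) = _
      have hsum : ∀ l ∈ Finset.Icc (j - 2) (j + 2), halfCmvC zseq j l * halfCmvCpow zseq n l k
          = if l = j + 2 then halfCmvCpow zseq n l k else 0 := by
        intro l _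
        rw [hz l k]
        simp only [he, if_true]
      rw [Finset.sum_congr rfl hsum, Finset.sum_ite_eq' (Finset.Icc (j - 2) (j + 2)) (j + 2)]
      rw [if_pos (Finset.mem_Icc.2 (by omega))]
      rw [(ih (j + 2)).1 (by rcases he with ⟨m, rfl⟩; exact ⟨m + 1, by omega⟩) k]
      congr 1
      simp only [eq_iff_iff]
      omega
    · intro he h2n k
      show (∑ l ∈ Finset.Icc (j - 2) (j + 2), halfCmvC zseq j l * halfCmvCpow zseq n l k) = _
      have hsum : ∀ l ∈ Finset.Icc (j - 2) (j + 2), halfCmvC zseq j l * halfCmvCpow zseq n l k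
          = if l = j - 2 then halfCmvCpow zseq n l k else 0 := by
        intro l _
        rw [hz l k]
        simp only [he, if_false]
      rw [Finset.sum_congr rfl hsum, Finset.sum_ite_eq' (Finset.Icc (j - 2) (j + 2)) (j - 2)]
      rw [if_pos (Finset.mem_Icc.2 (by omega))]
      have hjo : j % 2 = 1 := Nat.odd_iff.1 (Nat.not_even_iff_odd.1 he)
      have he2 : ¬ Even (j - 2) := by
        rw [Nat.even_iff]; omega
      rw [(ih (j - 2)).2 he2 (by omega) k]
      congr 1
      simp only [eq_iff_iff]
      omega

lemma powZseq_diag (n k : ℕ) (hn : 1 ≤ n) (hk : 2 * n ≤ k) :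
    halfCmvCpow zseq n k k = 0 := by
  by_cases he : Even k
  · rw [(powZseq n k).1 he k]
    rw [if_neg (by omega)]
  · rw [(powZseq n k).2 he (by omega) k]
    rw [if_neg (by omega)]

lemma pow_congr (α : ℕ → ℂ) : ∀ n, 1 ≤ n → ∀ j k (β : ℕ → ℂ),
    (∀ m, min j k - (2 * n - 1) ≤ m → m ≤ max j k + (2 * n - 1) → β m = α m) →
    halfCmvCpow β n j k = halfCmvCpow α n j k := by
  intro n
  induction n with
  | zero => intro h; exact absurd h (by norm_num)
  | succ n ih =>
    intro _ j k β hagree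
    show (∑ l ∈ Finset.Icc (j - 2) (j + 2), halfCmvC β j l * halfCmvCpow β n l k)
      = (∑ l ∈ Finset.Icc (j - 2) (j + 2), halfCmvC α j l * halfCmvCpow α n l k)
    refine Finset.sum_congr rfl ?_
    intro l hl
    rw [Finset.mem_Icc] at hl
    by_cases hn0 : n = 0
    · subst hn0
      simp only [halfCmvCpow]
      by_cases hlk : l = k
      · subst hlk
        rw [halfCmvC_congr α β j l (fun m h1 h2 => hagree m (by omega) (by omega))]
      · simp [hlk]
    · have hn1 : 1 ≤ n := by omega
      have hC : halfCmvC β j l = halfCmvC α j l :=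
        halfCmvC_congr α β j l (fun m h1 h2 => hagree m (by omega) (by omega))
      have hP : halfCmvCpow β n l k = halfCmvCpow α n l k :=
        ih hn1 l k β (fun m h1 h2 => hagree m (by omega) (by omega))
      rw [hC, hP]

lemma deltaBound (α : ℕ → ℂ) (hα : ∀ i, ‖α i‖ ≤ 1) : ∀ n, 1 ≤ n → ∀ j k,
    ‖halfCmvCpow α n j k - halfCmvCpow zseq n j k‖
      ≤ 4 ^ n * ∑ m ∈ Finset.Icc (min j k - (2 * n - 1)) (max j k + (2 * n - 1)),
          ‖α m‖ := by
  intro n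
  induction n with
  | zero => intro h; exact absurd h (by norm_num)
  | succ n ih =>
    intro _ j k
    by_cases hn0 : n = 0
    · subst hn0
      have hP1 : ∀ (γ : ℕ → ℂ), halfCmvCpow γ 1 j k
          = if k ∈ Finset.Icc (j - 2) (j + 2) then halfCmvC γ j k else 0 := by
        intro γ
        show (∑ l ∈ Finset.Icc (j - 2) (j + 2), halfCmvC γ j l * halfCmvCpow γ 0 l k) = _
        have hterm : ∀ l ∈ Finset.Icc (j - 2) (j + 2),
            halfCmvC γ j l * halfCmvCpow γ 0 l k
              = if l = k then halfCmvC γ j l else 0 := by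
          intro l _
          simp only [halfCmvCpow]
          split_ifs with h1 h2 h3 <;> first | (exfalso; omega) | simp | simp [h1]
        rw [Finset.sum_congr rfl hterm, Finset.sum_ite_eq' _ k (fun l => halfCmvC γ j l)]
      rw [show (0:ℕ) + 1 = 1 from rfl, hP1 α, hP1 zseq]
      split_ifs with hk
      · have h := entryDelta α hα j k
        have hnum1 : 2 * 1 - 1 = 1 := by norm_num
        simpa [hnum1] using h
      · simp only [sub_zero, norm_zero]
        positivity
    · have hn1 : 1 ≤ n := by omega
      set W := ∑ m ∈ Finset.Icc (min j k - (2 * (n + 1) - 1)) (max j k + (2 * (n + 1) - 1)),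
          ‖α m‖ with hWdef
      have hWnn : 0 ≤ W := W_nonneg α _ _
      show ‖(∑ l ∈ Finset.Icc (j - 2) (j + 2), halfCmvC α j l * halfCmvCpow α n l k)
          - (∑ l ∈ Finset.Icc (j - 2) (j + 2), halfCmvC zseq j l * halfCmvCpow zseq n l k)‖
        ≤ 4 ^ (n + 1) * W
      rw [← Finset.sum_sub_distrib]
      refine le_trans (norm_sum_le _ _) ?_
      have hΔP : ∀ l ∈ Finset.Icc (j - 2) (j + 2),
          ‖halfCmvCpow α n l k - halfCmvCpow zseq n l k‖ ≤ 4 ^ n * W := by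
        intro l hl
        rw [Finset.mem_Icc] at hl
        refine le_trans (ih hn1 l k) ?_
        have hsub : Finset.Icc (min l k - (2 * n - 1)) (max l k + (2 * n - 1))
            ⊆ Finset.Icc (min j k - (2 * (n + 1) - 1)) (max j k + (2 * (n + 1) - 1)) :=
          Finset.Icc_subset_Icc (by omega) (by omega)
        have := Finset.sum_le_sum_of_subset_of_nonneg hsub
          (fun i _ _ => norm_nonneg (α i))
        have h4 : (0:ℝ) ≤ 4 ^ n := by positivity
        rw [hWdef]
        nlinarith
      have key : ∀ l ∈ Finset.Icc (j - 2) (j + 2),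
          ‖halfCmvC α j l * halfCmvCpow α n l k
              - halfCmvC zseq j l * halfCmvCpow zseq n l k‖
            ≤ ‖halfCmvC α j l - halfCmvC zseq j l‖ * 4 ^ n
              + ‖halfCmvC zseq j l‖ * (4 ^ n * W) := by
        intro l hl
        have hid : halfCmvC α j l * halfCmvCpow α n l k
            - halfCmvC zseq j l * halfCmvCpow zseq n l k
            = (halfCmvC α j l - halfCmvC zseq j l) * halfCmvCpow α n l k
              + halfCmvC zseq j l * (halfCmvCpow α n l k - halfCmvCpow zseq n l k) := by
          ring
        rw [hid]
        refine le_trans (norm_add_le _ _) ?_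
        rw [norm_mul, norm_mul]
        have b1 : ‖halfCmvCpow α n l k‖ ≤ 4 ^ n := powAbs α hα n l k
        have b2 := hΔP l hl
        have n1 := norm_nonneg (halfCmvC α j l - halfCmvC zseq j l)
        have n2 := norm_nonneg (halfCmvC zseq j l)
        have n3 := norm_nonneg (halfCmvCpow α n l k)
        have n4 := norm_nonneg (halfCmvCpow α n l k - halfCmvCpow zseq n l k)
        nlinarith
      refine le_trans (Finset.sum_le_sum key) ?_
      rw [Finset.sum_add_distrib, ← Finset.sum_mul, ← Finset.sum_mul]
      have h1 : ∑ l ∈ Finset.Icc (j - 2) (j + 2),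
          ‖halfCmvC α j l - halfCmvC zseq j l‖ ≤ 3 * W := by
        refine le_trans (rowDelta α hα j) ?_
        have hsub : Finset.Icc (j - 2) (j + 1)
            ⊆ Finset.Icc (min j k - (2 * (n + 1) - 1)) (max j k + (2 * (n + 1) - 1)) :=
          Finset.Icc_subset_Icc (by omega) (by omega)
        have := Finset.sum_le_sum_of_subset_of_nonneg hsub
          (fun i _ _ => norm_nonneg (α i))
        rw [hWdef]
        linarith
      have h2 := rowZ_le_one j
      have h4 : (0:ℝ) ≤ 4 ^ n := by positivity
      have hrow1nn : (0:ℝ) ≤ ∑ l ∈ Finset.Icc (j - 2) (j + 2),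
          ‖halfCmvC α j l - halfCmvC zseq j l‖ :=
        Finset.sum_nonneg (fun i _ => norm_nonneg _)
      have hrow2nn : (0:ℝ) ≤ ∑ l ∈ Finset.Icc (j - 2) (j + 2),
          ‖halfCmvC zseq j l‖ :=
        Finset.sum_nonneg (fun i _ => norm_nonneg _)
      have hpow : (4:ℝ) ^ (n + 1) = 4 * 4 ^ n := by ring
      rw [hpow]
      have m1 := mul_le_mul_of_nonneg_right h1 h4
      have m2 := mul_le_mul_of_nonneg_right h2 (mul_nonneg h4 hWnn)
      nlinarith

end HalfAux

-- MAIN THEOREM BELOW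
/-- Let `(α_j)_{j≥0}` be a sequence in the open unit disk
with `Σ_j |α_j| < ∞`, and `C` the associated half-infinite CMV matrix. Then
for every `n ≥ 1` the series `Σ_{k≥0} (C^n)_{kk}` converges absolutely; each
diagonal entry `(C^n)_{kk}` depends only on `α_{k-(2n-1)}, …, α_{k+2n-1}`
(negative indices discarded); and
`|(C^n)_{kk}| ≤ 4^n (|α_{k-(2n-1)}| + ⋯ + |α_{k+2n-1}|)` for `k ≥ 4n`. -/
theorem halfCmv_diagonal_summable (α : ℕ → ℂ)
    (hα : ∀ j, ‖α j‖ < 1)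
    (hl1 : Summable fun j => ‖α j‖) (n : ℕ) (hn : 1 ≤ n) :
    Summable (fun k => ‖halfCmvCpow α n k k‖) ∧
    (∀ (k : ℕ) (β : ℕ → ℂ),
      (∀ m, k - (2 * n - 1) ≤ m → m ≤ k + (2 * n - 1) → β m = α m) →
      halfCmvCpow β n k k = halfCmvCpow α n k k) ∧
    (∀ k : ℕ, 4 * n ≤ k →
      ‖halfCmvCpow α n k k‖
        ≤ 4 ^ n * ∑ m ∈ Finset.Icc (k - (2 * n - 1)) (k + (2 * n - 1)),
            ‖α m‖) := by
  classical
  have hα1 : ∀ i, ‖α i‖ ≤ 1 := fun i => (hα i).le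
  have part3 : ∀ k : ℕ, 4 * n ≤ k →
      ‖halfCmvCpow α n k k‖
        ≤ 4 ^ n * ∑ m ∈ Finset.Icc (k - (2 * n - 1)) (k + (2 * n - 1)),
            ‖α m‖ := by
    intro k hk
    have hz : halfCmvCpow HalfAux.zseq n k k = 0 := HalfAux.powZseq_diag n k hn (by omega)
    have h := HalfAux.deltaBound α hα1 n hn k k
    rw [hz, sub_zero] at h
    simpa [min_self, max_self] using h
  refine ⟨?_, ?_, part3⟩
  · rw [← summable_nat_add_iff (4 * n)]
    have hle : ∀ k : ℕ, ‖halfCmvCpow α n (k + 4 * n) (k + 4 * n)‖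
        ≤ 4 ^ n * ∑ i ∈ Finset.range (4 * n - 1),
            ‖α (k + 2 * n + 1 + i)‖ := by
      intro k
      have h := part3 (k + 4 * n) (by omega)
      have heq : (∑ m ∈ Finset.Icc ((k + 4 * n) - (2 * n - 1)) ((k + 4 * n) + (2 * n - 1)),
          ‖α m‖)
            = ∑ i ∈ Finset.range (4 * n - 1), ‖α (k + 2 * n + 1 + i)‖ := by
        rw [← Finset.Ico_add_one_right_eq_Icc, Finset.sum_Ico_eq_sum_range]
        have e1 : (k + 4 * n) + (2 * n - 1) + 1 - ((k + 4 * n) - (2 * n - 1)) = 4 * n - 1 := by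
          omega
        have e2 : (k + 4 * n) - (2 * n - 1) = k + 2 * n + 1 := by omega
        rw [e1, e2]
      rw [heq] at h
      exact h
    refine Summable.of_nonneg_of_le (fun k => norm_nonneg _) hle ?_
    refine Summable.mul_left _ ?_
    refine summable_sum (fun i _ => ?_)
    have hsh : ∀ d : ℕ, Summable (fun k => ‖α (k + d)‖) :=
      fun d => (summable_nat_add_iff d).2 hl1
    have := hsh (2 * n + 1 + i)
    refine this.congr (fun k => ?_)
    have he : k + (2 * n + 1 + i) = k + 2 * n + 1 + i := by omega
    rw [he]
  · intro k β hβ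
    refine HalfAux.pow_congr α n hn k k β ?_
    intro m h1 h2
    refine hβ m ?_ ?_
    · simpa [min_self] using h1
    · simpa [max_self] using h2
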